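/- In Kretschmer's setting, for every α ≥ 0 the domain of the value function v satisfies dom v = {y ∈ L²[0,1] : ess sup y < ∞} = {y ∈ L²[0,1] : y₊ ∈ L^∞[0,1]}, where y₊ := max{y, 0}; in particular L^∞[0,1] ⊆ dom v, and the closure of dom v in L²[0,1] is all of L²[0,1]. -/

import Mathlib

open MeasureTheory

/-- Lebesgue measure on `[0,1]`. -/
noncomputable def mu : Measure ℝ := volume.restrict (Set.Icc (0 : ℝ) 1)

/-- Feasibility of `(x, r)` for the primal problem with right-hand side `y`:
`(x, r) ∈ P = L²₊ × ℝ₊` and `A(x,r) − y ∈ Q = L²₊`, where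
`A(x,r)(t) = ∫_t^1 x(s) ds + r`. -/
def Feas (y : ℝ → ℝ) (p : (ℝ → ℝ) × ℝ) : Prop :=
  MemLp p.1 2 mu ∧ (∀ᵐ t ∂mu, 0 ≤ p.1 t) ∧ 0 ≤ p.2 ∧
  ∀ᵐ t ∂mu, y t ≤ (∫ s in Set.Ioc t 1, p.1 s ∂mu) + p.2

/-- The cost `c*(x,r) = ∫_0^1 t x(t) dt + α r`. -/
noncomputable def cost (α : ℝ) (p : (ℝ → ℝ) × ℝ) : ℝ :=
  (∫ t, t * p.1 t ∂mu) + α * p.2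

/-- Kretschmer's value function on `Y = L²[0,1]`. -/
noncomputable def val (α : ℝ) (y : Lp ℝ 2 mu) : EReal :=
  ⨅ (p : (ℝ → ℝ) × ℝ) (_ : Feas (⇑y) p), ((cost α p : ℝ) : EReal)

instance : IsFiniteMeasure mu := by
  constructor
  simp [mu, Measure.restrict_apply_univ, Real.volume_Icc]

/-- If `y` is a.e. bounded above, then `((0,max C 0))` is feasible, so `val < ⊤`. -/
lemma val_lt_top_of_bdd (α : ℝ) (y : Lp ℝ 2 mu) (C : ℝ) (hC : ∀ᵐ t ∂mu, y t ≤ C) :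
    val α y < ⊤ := by
  have hFeas : Feas (⇑y) ((fun _ => 0), max C 0) := by
    refine ⟨by simpa using (memLp_const (0 : ℝ) (μ := mu)), ?_, le_max_right _ _, ?_⟩
    · exact Filter.Eventually.of_forall fun _ => le_rfl
    · filter_upwards [hC] with t ht
      simpa using ht.trans (le_max_left _ _)
  have h1 : val α y ≤ ((cost α ((fun _ => 0), max C 0) : ℝ) : EReal) := by
    exact iInf_le_of_le _ (iInf_le_of_le hFeas le_rfl)
  exact lt_of_le_of_lt h1 (EReal.coe_lt_top _)

/-- If `val < ⊤` then there is a feasible point, hence an a.e. upper bound. -/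
lemma bdd_of_val_lt_top (α : ℝ) (y : Lp ℝ 2 mu) (h : val α y < ⊤) :
    ∃ C : ℝ, ∀ᵐ t ∂mu, y t ≤ C := by
  obtain ⟨p, hp⟩ : ∃ p, Feas (⇑y) p := by
    by_contra hno
    push_neg at hno
    have : val α y = ⊤ := by
      rw [val]
      simp only [iInf_eq_top]
      exact fun p hp => absurd hp (hno p)
    rw [this] at h
    exact lt_irrefl _ h
  obtain ⟨hx2, hxpos, hr, hle⟩ := hp
  have hint : Integrable p.1 mu := hx2.integrable (by norm_num)
  refine ⟨(∫ s, p.1 s ∂mu) + p.2, ?_⟩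
  filter_upwards [hle] with t ht
  refine ht.trans (add_le_add_left ?_ _)
  exact setIntegral_le_integral hint hxpos

lemma bdd_iff_memtop (y : Lp ℝ 2 mu) :
    (∃ C : ℝ, ∀ᵐ t ∂mu, y t ≤ C) ↔ MemLp (fun t => max (y t) 0) ⊤ mu := by
  constructor
  · rintro ⟨C, hC⟩
    have hmeas : AEStronglyMeasurable (fun t => max (y t) 0) mu :=
      (Lp.aestronglyMeasurable y).sup aestronglyMeasurable_const
    refine memLp_top_of_bound hmeas (max C 0) ?_
    filter_upwards [hC] with t ht
    rw [Real.norm_eq_abs, abs_of_nonneg (le_max_right _ _)]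
    exact max_le_max ht le_rfl
  · intro hf
    have hlt : eLpNormEssSup (fun t => max (y t) 0) mu < ⊤ := by
      have := hf.2
      rwa [eLpNorm_exponent_top] at this
    refine ⟨(eLpNormEssSup (fun t => max (y t) 0) mu).toReal, ?_⟩
    filter_upwards [ae_le_eLpNormEssSup (f := fun t => max (y t) 0) (μ := mu)] with t ht
    have h1 : y t ≤ max (y t) 0 := le_max_left _ _
    have h2 : max (y t) 0 ≤ ‖max (y t) 0‖ := le_abs_self _
    refine h1.trans (h2.trans ?_)
    have := ENNReal.toReal_mono hlt.ne ht
    simpa using this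

/-- In Kretschmer's setting, for every `α ≥ 0`:
`dom v = {y ∈ L² : ess sup y < ∞} = {y ∈ L² : y₊ ∈ L^∞}`; in particular
`L^∞ ⊆ dom v`, and `dom v` is dense in `L²[0,1]`. -/
theorem stmt13 (α : ℝ) (hα : 0 ≤ α) :
    ({y : Lp ℝ 2 mu | val α y < ⊤} = {y : Lp ℝ 2 mu | ∃ C : ℝ, ∀ᵐ t ∂mu, y t ≤ C}) ∧
    ({y : Lp ℝ 2 mu | val α y < ⊤} =
      {y : Lp ℝ 2 mu | MemLp (fun t => max (y t) 0) ⊤ mu}) ∧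
    (∀ y : Lp ℝ 2 mu, MemLp (⇑y) ⊤ mu → val α y < ⊤) ∧
    closure {y : Lp ℝ 2 mu | val α y < ⊤} = Set.univ := by
  have key : {y : Lp ℝ 2 mu | val α y < ⊤}
      = {y : Lp ℝ 2 mu | ∃ C : ℝ, ∀ᵐ t ∂mu, y t ≤ C} := by
    ext y
    exact ⟨fun h => bdd_of_val_lt_top α y h, fun ⟨C, hC⟩ => val_lt_top_of_bdd α y C hC⟩
  refine ⟨key, ?_, ?_, ?_⟩
  · rw [key]; ext y; exact bdd_iff_memtop y
  · intro y hy
    refine val_lt_top_of_bdd α y (eLpNormEssSup (⇑y) mu).toReal ?_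
    have hlt : eLpNormEssSup (⇑y) mu < ⊤ := by
      have := hy.2
      rwa [eLpNorm_exponent_top] at this
    filter_upwards [ae_le_eLpNormEssSup (f := ⇑y) (μ := mu)] with t ht
    have h2 : y t ≤ ‖y t‖ := le_abs_self _
    refine h2.trans ?_
    have := ENNReal.toReal_mono hlt.ne ht
    simpa using this
  · rw [key]
    have hsub : Set.range ((↑) : Lp.simpleFunc ℝ 2 mu → Lp ℝ 2 mu)
        ⊆ {y : Lp ℝ 2 mu | ∃ C : ℝ, ∀ᵐ t ∂mu, y t ≤ C} := by
      rintro _ ⟨s, rfl⟩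
      obtain ⟨C, hC⟩ := (Lp.simpleFunc.toSimpleFunc s).exists_forall_norm_le
      refine ⟨C, ?_⟩
      filter_upwards [Lp.simpleFunc.toSimpleFunc_eq_toFun s] with t ht
      rw [← ht]
      exact (le_abs_self _).trans (hC t)
    have hdr := (Lp.simpleFunc.denseRange (E := ℝ) (μ := mu) (p := 2)
      (by norm_num)).closure_range
    apply Set.eq_univ_of_univ_subset
    rw [← hdr]
    exact closure_mono hsub
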